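/- Let G be a GHZ multigraph with a 2-vertex cut {u,v} separating A (odd size) from B. Then w(2_A 1_u)·w(2_B 1_v)·w(2_A 1_v)·w(2_B 1_u) = 0, where 1 and 2 are any two colours whose monochromatic vertex colourings have weight 1. Combined with the preceding nonvanishing statement, this yields a contradiction when there are three feasible monochromatic colourings. -/

import Mathlib

open scoped Classical

/-- An edge-coloured edge-weighted multigraph (no self-loops) on vertex set `V`.
Each edge `e` has two endpoints `fst e`, `snd e`, a colour on each of its two
half-edges (`cf e` at `fst e`, `cs e` at `snd e`) and a complex weight `w e`. -/
structure EMG (V : Type) [Fintype V] [DecidableEq V] where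
  E : Type
  [fintypeE : Fintype E]
  fst : E → V
  snd : E → V
  noLoop : ∀ e, fst e ≠ snd e
  cf : E → ℕ
  cs : E → ℕ
  w : E → ℂ

namespace EMG

attribute [instance] EMG.fintypeE

variable {V : Type} [Fintype V] [DecidableEq V] (G : EMG V)

/-- `e` is incident to vertex `x`. -/
def inc (e : G.E) (x : V) : Prop := G.fst e = x ∨ G.snd e = x

/-- `M` is a perfect matching of the induced subgraph on `S`: all edges of `M`
lie inside `S` and every vertex of `S` is covered exactly once. -/
def IsPMOn (S : Finset V) (M : Finset G.E) : Prop :=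
  (∀ e ∈ M, G.fst e ∈ S ∧ G.snd e ∈ S) ∧ ∀ x ∈ S, ∃! e, e ∈ M ∧ G.inc e x

/-- `M` is a perfect matching of `G`. -/
def IsPM (M : Finset G.E) : Prop := G.IsPMOn Finset.univ M

/-- `M` induces the vertex colouring `vc`: every edge of `M` survives the
filtering by `vc` (half-edge colours agree with the endpoint colours). -/
def Induces (M : Finset G.E) (vc : V → ℕ) : Prop :=
  ∀ e ∈ M, G.cf e = vc (G.fst e) ∧ G.cs e = vc (G.snd e)

/-- The weight of the vertex colouring `vc` on the induced subgraph on `S`: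
the sum over perfect matchings of the filtered subgraph of the products of
edge weights. -/
noncomputable def wcolOn (S : Finset V) (vc : V → ℕ) : ℂ :=
  ∑ M ∈ Finset.univ.filter (fun M => G.IsPMOn S M ∧ G.Induces M vc),
    ∏ e ∈ M, G.w e

/-- The weight of the vertex colouring `vc` in `G`. -/
noncomputable def wcol (vc : V → ℕ) : ℂ := G.wcolOn Finset.univ vc

/-- `vc` is feasible: the subgraph filtered by `vc` has a perfect matching. -/
def Feasible (vc : V → ℕ) : Prop := ∃ M, G.IsPM M ∧ G.Induces M vc

/-- `G` is a GHZ graph: all feasible monochromatic vertex colourings have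
weight `1` and all non-monochromatic vertex colourings have weight `0`. -/
def IsGHZ : Prop :=
  (∀ i : ℕ, G.Feasible (fun _ => i) → G.wcol (fun _ => i) = 1) ∧
  (∀ vc : V → ℕ, (¬ ∃ i : ℕ, ∀ x, vc x = i) → G.wcol vc = 0)

/-- `G` is a g-GHZ graph: all feasible monochromatic vertex colourings have
non-zero weight and all non-monochromatic vertex colourings have weight `0`. -/
def IsgGHZ : Prop :=
  (∀ i : ℕ, G.Feasible (fun _ => i) → G.wcol (fun _ => i) ≠ 0) ∧
  (∀ vc : V → ℕ, (¬ ∃ i : ℕ, ∀ x, vc x = i) → G.wcol vc = 0)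

/-- The dimension: the number of feasible monochromatic vertex colourings. -/
noncomputable def dimension : ℕ := Set.ncard {i : ℕ | G.Feasible (fun _ => i)}

/-- The skeleton of `G`: its underlying simple graph. -/
def skeleton : SimpleGraph V where
  Adj a b := a ≠ b ∧ ∃ e : G.E, (G.fst e = a ∧ G.snd e = b) ∨ (G.fst e = b ∧ G.snd e = a)
  symm := by
    constructor
    intro a b h
    refine ⟨h.1.symm, ?_⟩
    obtain ⟨e, he⟩ := h.2
    exact ⟨e, he.symm⟩
  loopless := by constructor; intro a h; exact h.1 rfl

/-- Replace the weight function of `G`. -/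
def reweight (w' : G.E → ℂ) : EMG V := { G with w := w' }

/-- Delete the edges in `D` from `G`. -/
noncomputable def deleteEdges (D : Finset G.E) : EMG V where
  E := {e : G.E // e ∉ D}
  fst e := G.fst e.1
  snd e := G.snd e.1
  noLoop e := G.noLoop e.1
  cf e := G.cf e.1
  cs e := G.cs e.1
  w e := G.w e.1

/-- `M` is a monochromatic perfect matching of colour `i` (as a set of coloured
edges: all half-edges of `M` carry colour `i`). -/
def MonoPM (M : Finset G.E) (i : ℕ) : Prop :=
  ∀ e ∈ M, G.cf e = i ∧ G.cs e = i

/-- Both endpoints of `e` lie in `S`. -/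
def bothIn (S : Finset V) (e : G.E) : Prop := G.fst e ∈ S ∧ G.snd e ∈ S

/-- `e` joins a vertex of `S` to the vertex `x`. -/
def connectsTo (S : Finset V) (x : V) (e : G.E) : Prop :=
  (G.fst e ∈ S ∧ G.snd e = x) ∨ (G.snd e ∈ S ∧ G.fst e = x)

end EMG

/-- The matching index of a simple graph `H`: the maximum dimension over all
GHZ edge-coloured edge-weighted multigraphs whose skeleton is `H`. -/
noncomputable def matchingIndex {V : Type} [Fintype V] [DecidableEq V]
    (H : SimpleGraph V) : ℕ :=
  sSup {d : ℕ | ∃ G : EMG V, G.skeleton = H ∧ G.IsGHZ ∧ G.dimension = d}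

section Helpers

namespace EMG

variable {V : Type} [Fintype V] [DecidableEq V] (G : EMG V)

lemma pm_unique {S : Finset V} {M : Finset G.E} (h : G.IsPMOn S M)
    {e f : G.E} (he : e ∈ M) (hf : f ∈ M) {x : V} (hx : x ∈ S)
    (hex : G.inc e x) (hfx : G.inc f x) : e = f := by
  obtain ⟨g, -, hun⟩ := h.2 x hx
  rw [hun e ⟨he, hex⟩, hun f ⟨hf, hfx⟩]

lemma wcolOn_congr (S : Finset V) {vc vc' : V → ℕ} (h : ∀ x ∈ S, vc x = vc' x) :
    G.wcolOn S vc = G.wcolOn S vc' := by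
  unfold wcolOn
  congr 1
  apply Finset.filter_congr
  intro M _
  constructor <;> rintro ⟨hpm, hind⟩ <;> refine ⟨hpm, fun e he => ?_⟩ <;>
    obtain ⟨h1, h2⟩ := hind e he <;> obtain ⟨hf, hs⟩ := hpm.1 e he
  · exact ⟨by rw [h1, h _ hf], by rw [h2, h _ hs]⟩
  · exact ⟨by rw [h1, ← h _ hf], by rw [h2, ← h _ hs]⟩

lemma glue {S T : Finset V} (hST : Disjoint S T)
    {M1 M2 : Finset G.E} (h1 : G.IsPMOn S M1) (h2 : G.IsPMOn T M2) :
    Disjoint M1 M2 ∧ G.IsPMOn (S ∪ T) (M1 ∪ M2) := by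
  have hdm : Disjoint M1 M2 := by
    rw [Finset.disjoint_left]
    intro e he1 he2
    exact (Finset.disjoint_left.mp hST (h1.1 e he1).1) (h2.1 e he2).1
  refine ⟨hdm, ⟨?_, ?_⟩⟩
  · intro e he
    rcases Finset.mem_union.mp he with h | h
    · exact ⟨Finset.mem_union_left _ (h1.1 e h).1, Finset.mem_union_left _ (h1.1 e h).2⟩
    · exact ⟨Finset.mem_union_right _ (h2.1 e h).1, Finset.mem_union_right _ (h2.1 e h).2⟩
  · intro x hx
    rcases Finset.mem_union.mp hx with hxS | hxT
    · obtain ⟨e, ⟨heM, hei⟩, hun⟩ := h1.2 x hxS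
      refine ⟨e, ⟨Finset.mem_union_left _ heM, hei⟩, ?_⟩
      rintro f ⟨hfM, hfi⟩
      rcases Finset.mem_union.mp hfM with hf | hf
      · exact hun f ⟨hf, hfi⟩
      · exfalso
        rcases hfi with h' | h'
        · exact Finset.disjoint_right.mp hST (h' ▸ (h2.1 f hf).1) hxS
        · exact Finset.disjoint_right.mp hST (h' ▸ (h2.1 f hf).2) hxS
    · obtain ⟨e, ⟨heM, hei⟩, hun⟩ := h2.2 x hxT
      refine ⟨e, ⟨Finset.mem_union_right _ heM, hei⟩, ?_⟩
      rintro f ⟨hfM, hfi⟩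
      rcases Finset.mem_union.mp hfM with hf | hf
      · exfalso
        rcases hfi with h' | h'
        · exact Finset.disjoint_left.mp hST (h' ▸ (h1.1 f hf).1) hxT
        · exact Finset.disjoint_left.mp hST (h' ▸ (h1.1 f hf).2) hxT
      · exact hun f ⟨hf, hfi⟩

lemma splitPM {S T : Finset V} (hST : Disjoint S T) {M : Finset G.E}
    (h : G.IsPMOn (S ∪ T) M)
    (hside : ∀ e ∈ M, G.bothIn S e ∨ G.bothIn T e) :
    G.IsPMOn S (M.filter (fun e => G.bothIn S e)) ∧
    G.IsPMOn T (M.filter (fun e => G.bothIn T e)) ∧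
      M = M.filter (fun e => G.bothIn S e) ∪ M.filter (fun e => G.bothIn T e) := by
  refine ⟨⟨?_, ?_⟩, ⟨?_, ?_⟩, ?_⟩
  · intro e he
    exact (Finset.mem_filter.mp he).2
  · intro x hxS
    obtain ⟨e, ⟨heM, hei⟩, hun⟩ := h.2 x (Finset.mem_union_left _ hxS)
    have heS : G.bothIn S e := by
      rcases hside e heM with hb | hb
      · exact hb
      · exfalso
        rcases hei with h' | h'
        · exact Finset.disjoint_right.mp hST (h' ▸ hb.1) hxS
        · exact Finset.disjoint_right.mp hST (h' ▸ hb.2) hxS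
    refine ⟨e, ⟨Finset.mem_filter.mpr ⟨heM, heS⟩, hei⟩, ?_⟩
    rintro f ⟨hf, hfi⟩
    exact hun f ⟨(Finset.mem_filter.mp hf).1, hfi⟩
  · intro e he
    exact (Finset.mem_filter.mp he).2
  · intro x hxT
    obtain ⟨e, ⟨heM, hei⟩, hun⟩ := h.2 x (Finset.mem_union_right _ hxT)
    have heT : G.bothIn T e := by
      rcases hside e heM with hb | hb
      · exfalso
        rcases hei with h' | h'
        · exact Finset.disjoint_left.mp hST (h' ▸ hb.1) hxT
        · exact Finset.disjoint_left.mp hST (h' ▸ hb.2) hxT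
      · exact hb
    refine ⟨e, ⟨Finset.mem_filter.mpr ⟨heM, heT⟩, hei⟩, ?_⟩
    rintro f ⟨hf, hfi⟩
    exact hun f ⟨(Finset.mem_filter.mp hf).1, hfi⟩
  · ext e
    simp only [Finset.mem_union, Finset.mem_filter]
    constructor
    · intro he
      rcases hside e he with hb | hb
      · exact Or.inl ⟨he, hb⟩
      · exact Or.inr ⟨he, hb⟩
    · rintro (⟨he, -⟩ | ⟨he, -⟩) <;> exact he

lemma mem_pair_inc {e : G.E} {y : V} (h : y ∈ ({G.fst e, G.snd e} : Finset V)) :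
    G.inc e y := by
  rcases Finset.mem_insert.mp h with h | h
  · exact Or.inl h.symm
  · exact Or.inr (Finset.mem_singleton.mp h).symm

lemma oneCrossing (u v : V) (huv : u ≠ v) (A B : Finset V)
    (hdisj : Disjoint A B) (huA : u ∉ A) (huB : u ∉ B) (hvA : v ∉ A) (hvB : v ∉ B)
    (hcover : ∀ x : V, x ∈ A ∨ x ∈ B ∨ x = u ∨ x = v)
    (hsep : ∀ e : G.E, ¬ (G.fst e ∈ A ∧ G.snd e ∈ B) ∧ ¬ (G.fst e ∈ B ∧ G.snd e ∈ A))
    (hodd : Odd A.card) {M : Finset G.E} (hM : G.IsPMOn Finset.univ M) :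
    (M.filter (fun e => (G.fst e ∈ A ∨ G.snd e ∈ A) ∧ ¬(G.fst e ∈ A ∧ G.snd e ∈ A))).card = 1 := by
  classical
  set N := M.filter (fun e => G.fst e ∈ A ∨ G.snd e ∈ A) with hN
  have hAeq : A = N.biUnion (fun e => ({G.fst e, G.snd e} : Finset V) ∩ A) := by
    ext x
    simp only [Finset.mem_biUnion, Finset.mem_inter]
    constructor
    · intro hx
      obtain ⟨e, ⟨heM, hei⟩, -⟩ := hM.2 x (Finset.mem_univ x)
      refine ⟨e, Finset.mem_filter.mpr ⟨heM, ?_⟩, ?_, hx⟩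
      · rcases hei with h | h
        · exact Or.inl (h ▸ hx)
        · exact Or.inr (h ▸ hx)
      · rcases hei with h | h
        · exact h ▸ Finset.mem_insert_self _ _
        · exact h ▸ Finset.mem_insert_of_mem (Finset.mem_singleton_self _)
    · rintro ⟨e, -, -, hx⟩; exact hx
  have hcard : A.card = ∑ e ∈ N, (({G.fst e, G.snd e} : Finset V) ∩ A).card := by
    conv_lhs => rw [hAeq]
    apply Finset.card_biUnion
    intro e he f hf hef
    rw [Function.onFun, Finset.disjoint_left]
    intro y hy hy'
    exact hef (G.pm_unique hM (Finset.mem_filter.mp he).1 (Finset.mem_filter.mp hf).1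
      (Finset.mem_univ y) (G.mem_pair_inc (Finset.mem_inter.mp hy).1)
      (G.mem_pair_inc (Finset.mem_inter.mp hy').1))
  have hsplit := Finset.sum_filter_add_sum_filter_not N (fun e => G.fst e ∈ A ∧ G.snd e ∈ A)
    (fun e => (({G.fst e, G.snd e} : Finset V) ∩ A).card)
  have h2 : ∑ e ∈ N.filter (fun e => G.fst e ∈ A ∧ G.snd e ∈ A),
      (({G.fst e, G.snd e} : Finset V) ∩ A).card
      = (N.filter (fun e => G.fst e ∈ A ∧ G.snd e ∈ A)).card * 2 := by
    rw [Finset.sum_congr rfl (fun e he => ?_), Finset.sum_const, smul_eq_mul]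
    obtain ⟨-, hf, hs⟩ := Finset.mem_filter.mp he
    rw [Finset.inter_eq_left.mpr ?_]
    · rw [Finset.card_insert_of_notMem (by simp [G.noLoop e]), Finset.card_singleton]
    · intro y hy
      rcases Finset.mem_insert.mp hy with rfl | hy'
      · exact hf
      · rw [Finset.mem_singleton.mp hy']; exact hs
  have h1 : ∑ e ∈ N.filter (fun e => ¬(G.fst e ∈ A ∧ G.snd e ∈ A)),
      (({G.fst e, G.snd e} : Finset V) ∩ A).card
      = (N.filter (fun e => ¬(G.fst e ∈ A ∧ G.snd e ∈ A))).card := by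
    rw [Finset.sum_congr rfl (fun e he => ?_), Finset.sum_const, smul_eq_mul, mul_one]
    obtain ⟨heN, hnb⟩ := Finset.mem_filter.mp he
    obtain ⟨-, hor⟩ := Finset.mem_filter.mp heN
    rw [Finset.card_eq_one]
    rcases hor with h | h
    · refine ⟨G.fst e, ?_⟩
      ext y
      simp only [Finset.mem_inter, Finset.mem_insert, Finset.mem_singleton]
      constructor
      · rintro ⟨rfl | rfl, hyA⟩
        · rfl
        · exact absurd ⟨h, hyA⟩ hnb
      · rintro rfl; exact ⟨Or.inl rfl, h⟩
    · refine ⟨G.snd e, ?_⟩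
      ext y
      simp only [Finset.mem_inter, Finset.mem_insert, Finset.mem_singleton]
      constructor
      · rintro ⟨rfl | rfl, hyA⟩
        · exact absurd ⟨hyA, h⟩ hnb
        · rfl
      · rintro rfl; exact ⟨Or.inr rfl, h⟩
  have hsub : N.filter (fun e => ¬(G.fst e ∈ A ∧ G.snd e ∈ A)) ⊆
      M.filter (fun e => G.inc e u) ∪ M.filter (fun e => G.inc e v) := by
    intro e he
    obtain ⟨heN, hnb⟩ := Finset.mem_filter.mp he
    obtain ⟨heM, hor⟩ := Finset.mem_filter.mp heN
    rcases hor with h | h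
    · have hsA : G.snd e ∉ A := fun hs => hnb ⟨h, hs⟩
      have hsB : G.snd e ∉ B := fun hs => (hsep e).1 ⟨h, hs⟩
      rcases hcover (G.snd e) with h' | h' | h' | h'
      · exact absurd h' hsA
      · exact absurd h' hsB
      · exact Finset.mem_union_left _ (Finset.mem_filter.mpr ⟨heM, Or.inr h'⟩)
      · exact Finset.mem_union_right _ (Finset.mem_filter.mpr ⟨heM, Or.inr h'⟩)
    · have hfA : G.fst e ∉ A := fun hs => hnb ⟨hs, h⟩
      have hfB : G.fst e ∉ B := fun hs => (hsep e).2 ⟨hs, h⟩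
      rcases hcover (G.fst e) with h' | h' | h' | h'
      · exact absurd h' hfA
      · exact absurd h' hfB
      · exact Finset.mem_union_left _ (Finset.mem_filter.mpr ⟨heM, Or.inl h'⟩)
      · exact Finset.mem_union_right _ (Finset.mem_filter.mpr ⟨heM, Or.inl h'⟩)
  have hle1 : ∀ x : V, (M.filter (fun e => G.inc e x)).card ≤ 1 := by
    intro x
    rw [Finset.card_le_one]
    intro e he f hf
    exact G.pm_unique hM (Finset.mem_filter.mp he).1 (Finset.mem_filter.mp hf).1
      (Finset.mem_univ x) (Finset.mem_filter.mp he).2 (Finset.mem_filter.mp hf).2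
  have hle2 : (N.filter (fun e => ¬(G.fst e ∈ A ∧ G.snd e ∈ A))).card ≤ 2 :=
    le_trans (Finset.card_le_card hsub)
      (le_trans (Finset.card_union_le _ _) (by
        have := hle1 u; have := hle1 v; omega))
  have hgoal : (M.filter (fun e => (G.fst e ∈ A ∨ G.snd e ∈ A) ∧
      ¬(G.fst e ∈ A ∧ G.snd e ∈ A))).card
      = (N.filter (fun e => ¬(G.fst e ∈ A ∧ G.snd e ∈ A))).card := by
    rw [hN, Finset.filter_filter]
  rw [hgoal]
  obtain ⟨k, hk⟩ := hodd
  rw [hcard, ← hsplit, h1, h2] at hk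
  omega

lemma sides (u v : V) (huv : u ≠ v) (A B : Finset V)
    (hdisj : Disjoint A B) (huA : u ∉ A) (huB : u ∉ B) (hvA : v ∉ A) (hvB : v ∉ B)
    (hcover : ∀ x : V, x ∈ A ∨ x ∈ B ∨ x = u ∨ x = v)
    (hsep : ∀ e : G.E, ¬ (G.fst e ∈ A ∧ G.snd e ∈ B) ∧ ¬ (G.fst e ∈ B ∧ G.snd e ∈ A))
    (hodd : Odd A.card) {M : Finset G.E} (hM : G.IsPMOn Finset.univ M)
    {e0 : G.E} (he0 : e0 ∈ M) (hu0 : G.inc e0 u)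
    (hA0 : G.fst e0 ∈ A ∨ G.snd e0 ∈ A) :
    ∀ e ∈ M, G.bothIn (insert u A) e ∨ G.bothIn (insert v B) e := by
  classical
  have hone := G.oneCrossing u v huv A B hdisj huA huB hvA hvB hcover hsep hodd hM
  have he0mem : e0 ∈ M.filter (fun e => (G.fst e ∈ A ∨ G.snd e ∈ A) ∧
      ¬(G.fst e ∈ A ∧ G.snd e ∈ A)) := by
    refine Finset.mem_filter.mpr ⟨he0, hA0, ?_⟩
    rintro ⟨hf, hs⟩
    rcases hu0 with h | h
    · exact huA (h ▸ hf)
    · exact huA (h ▸ hs)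
  obtain ⟨x0, hx0⟩ := Finset.card_eq_one.mp hone
  have hx0e0 : x0 = e0 := by
    have := he0mem
    rw [hx0] at this
    exact (Finset.mem_singleton.mp this).symm
  rw [hx0e0] at hx0
  intro e he
  by_cases hiu : G.inc e u
  · left
    have hee0 : e = e0 := G.pm_unique hM he he0 (Finset.mem_univ u) hiu hu0
    rw [hee0]
    rcases hu0 with h | h
    · have hsA : G.snd e0 ∈ A := by
        rcases hA0 with h' | h'
        · exact absurd (h ▸ h') huA
        · exact h'
      exact ⟨h ▸ Finset.mem_insert_self _ _, Finset.mem_insert_of_mem hsA⟩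
    · have hfA : G.fst e0 ∈ A := by
        rcases hA0 with h' | h'
        · exact h'
        · exact absurd (h ▸ h') huA
      exact ⟨Finset.mem_insert_of_mem hfA, h ▸ Finset.mem_insert_self _ _⟩
  · have hnot : ¬((G.fst e ∈ A ∨ G.snd e ∈ A) ∧ ¬(G.fst e ∈ A ∧ G.snd e ∈ A)) := by
      intro hp
      have : e ∈ M.filter (fun e => (G.fst e ∈ A ∨ G.snd e ∈ A) ∧
          ¬(G.fst e ∈ A ∧ G.snd e ∈ A)) := Finset.mem_filter.mpr ⟨he, hp⟩
      rw [hx0] at this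
      exact hiu ((Finset.mem_singleton.mp this) ▸ hu0)
    by_cases hfA : G.fst e ∈ A <;> by_cases hsA : G.snd e ∈ A
    · exact Or.inl ⟨Finset.mem_insert_of_mem hfA, Finset.mem_insert_of_mem hsA⟩
    · exact absurd ⟨Or.inl hfA, fun hb => hsA hb.2⟩ hnot
    · exact absurd ⟨Or.inr hsA, fun hb => hfA hb.1⟩ hnot
    · refine Or.inr ⟨?_, ?_⟩
      · rcases hcover (G.fst e) with h | h | h | h
        · exact absurd h hfA
        · exact Finset.mem_insert_of_mem h
        · exact absurd (Or.inl h) hiu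
        · exact h ▸ Finset.mem_insert_self _ _
      · rcases hcover (G.snd e) with h | h | h | h
        · exact absurd h hsA
        · exact Finset.mem_insert_of_mem h
        · exact absurd (Or.inr h) hiu
        · exact h ▸ Finset.mem_insert_self _ _

lemma crossing_cases (u v : V) (huv : u ≠ v) (A B : Finset V)
    (hdisj : Disjoint A B) (huA : u ∉ A) (huB : u ∉ B) (hvA : v ∉ A) (hvB : v ∉ B)
    (hcover : ∀ x : V, x ∈ A ∨ x ∈ B ∨ x = u ∨ x = v)
    (hsep : ∀ e : G.E, ¬ (G.fst e ∈ A ∧ G.snd e ∈ B) ∧ ¬ (G.fst e ∈ B ∧ G.snd e ∈ A))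
    (hodd : Odd A.card) {M : Finset G.E} (hM : G.IsPMOn Finset.univ M) :
    ((∃ e ∈ M, G.inc e u ∧ (G.fst e ∈ A ∨ G.snd e ∈ A)) ∨
     (∃ e ∈ M, G.inc e v ∧ (G.fst e ∈ A ∨ G.snd e ∈ A))) ∧
    ¬((∃ e ∈ M, G.inc e u ∧ (G.fst e ∈ A ∨ G.snd e ∈ A)) ∧
      (∃ e ∈ M, G.inc e v ∧ (G.fst e ∈ A ∨ G.snd e ∈ A))) := by
  classical
  have hone := G.oneCrossing u v huv A B hdisj huA huB hvA hvB hcover hsep hodd hM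
  obtain ⟨e0, hx0⟩ := Finset.card_eq_one.mp hone
  have he0 : e0 ∈ M.filter (fun e => (G.fst e ∈ A ∨ G.snd e ∈ A) ∧
      ¬(G.fst e ∈ A ∧ G.snd e ∈ A)) := hx0 ▸ Finset.mem_singleton_self _
  obtain ⟨he0M, hor, hnb⟩ := Finset.mem_filter.mp he0
  constructor
  · rcases hor with h | h
    · have hsA : G.snd e0 ∉ A := fun hs => hnb ⟨h, hs⟩
      have hsB : G.snd e0 ∉ B := fun hs => (hsep e0).1 ⟨h, hs⟩
      rcases hcover (G.snd e0) with h' | h' | h' | h'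
      · exact absurd h' hsA
      · exact absurd h' hsB
      · exact Or.inl ⟨e0, he0M, Or.inr h', Or.inl h⟩
      · exact Or.inr ⟨e0, he0M, Or.inr h', Or.inl h⟩
    · have hfA : G.fst e0 ∉ A := fun hs => hnb ⟨hs, h⟩
      have hfB : G.fst e0 ∉ B := fun hs => (hsep e0).2 ⟨hs, h⟩
      rcases hcover (G.fst e0) with h' | h' | h' | h'
      · exact absurd h' hfA
      · exact absurd h' hfB
      · exact Or.inl ⟨e0, he0M, Or.inl h', Or.inr h⟩
      · exact Or.inr ⟨e0, he0M, Or.inl h', Or.inr h⟩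
  · rintro ⟨⟨e, heM, heu, heA⟩, ⟨f, hfM, hfv, hfA⟩⟩
    have hemem : e ∈ M.filter (fun e => (G.fst e ∈ A ∨ G.snd e ∈ A) ∧
        ¬(G.fst e ∈ A ∧ G.snd e ∈ A)) := by
      refine Finset.mem_filter.mpr ⟨heM, heA, ?_⟩
      rintro ⟨h1, h2⟩
      rcases heu with h | h
      · exact huA (h ▸ h1)
      · exact huA (h ▸ h2)
    have hfmem : f ∈ M.filter (fun e => (G.fst e ∈ A ∨ G.snd e ∈ A) ∧
        ¬(G.fst e ∈ A ∧ G.snd e ∈ A)) := by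
      refine Finset.mem_filter.mpr ⟨hfM, hfA, ?_⟩
      rintro ⟨h1, h2⟩
      rcases hfv with h | h
      · exact hvA (h ▸ h1)
      · exact hvA (h ▸ h2)
    rw [hx0] at hemem hfmem
    have he' : e = e0 := Finset.mem_singleton.mp hemem
    have hf' : f = e0 := Finset.mem_singleton.mp hfmem
    subst he'; subst hf'
    rcases heu with h1 | h1 <;> rcases hfv with h2 | h2
    · exact huv (h1 ▸ h2 ▸ rfl)
    · rcases heA with h3 | h3
      · exact huA (h1 ▸ h3)
      · exact hvA (h2 ▸ h3)
    · rcases heA with h3 | h3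
      · exact hvA (h2 ▸ h3)
      · exact huA (h1 ▸ h3)
    · exact huv (h1 ▸ h2 ▸ rfl)

lemma sum_part (u v : V) (huv : u ≠ v) (A B : Finset V)
    (hdisj : Disjoint A B) (huA : u ∉ A) (huB : u ∉ B) (hvA : v ∉ A) (hvB : v ∉ B)
    (hcover : ∀ x : V, x ∈ A ∨ x ∈ B ∨ x = u ∨ x = v)
    (hsep : ∀ e : G.E, ¬ (G.fst e ∈ A ∧ G.snd e ∈ B) ∧ ¬ (G.fst e ∈ B ∧ G.snd e ∈ A))
    (hodd : Odd A.card) (vc : V → ℕ) :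
    ∑ M ∈ (Finset.univ.filter
        (fun M => G.IsPMOn Finset.univ M ∧ G.Induces M vc)).filter
        (fun M => ∃ e ∈ M, G.inc e u ∧ (G.fst e ∈ A ∨ G.snd e ∈ A)),
      ∏ e ∈ M, G.w e
    = G.wcolOn (insert u A) vc * G.wcolOn (insert v B) vc := by
  classical
  have hdisj2 : Disjoint (insert u A) (insert v B) := by
    rw [Finset.disjoint_left]
    intro x hx hx'
    rcases Finset.mem_insert.mp hx with rfl | hxA
    · rcases Finset.mem_insert.mp hx' with h | h
      · exact huv h
      · exact huB h
    · rcases Finset.mem_insert.mp hx' with rfl | h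
      · exact hvA hxA
      · exact Finset.disjoint_left.mp hdisj hxA h
  have hUnion : insert u A ∪ insert v B = (Finset.univ : Finset V) := by
    apply Finset.eq_univ_of_forall
    intro x
    rcases hcover x with h | h | rfl | rfl
    · exact Finset.mem_union_left _ (Finset.mem_insert_of_mem h)
    · exact Finset.mem_union_right _ (Finset.mem_insert_of_mem h)
    · exact Finset.mem_union_left _ (Finset.mem_insert_self _ _)
    · exact Finset.mem_union_right _ (Finset.mem_insert_self _ _)
  unfold wcolOn
  rw [Finset.sum_mul_sum, ← Finset.sum_product']
  symm
  apply Finset.sum_nbij' (i := fun p : Finset G.E × Finset G.E => p.1 ∪ p.2)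
    (j := fun M => (M.filter (fun e => G.bothIn (insert u A) e),
                    M.filter (fun e => G.bothIn (insert v B) e)))
  · rintro ⟨M1, M2⟩ hp
    rw [Finset.mem_product] at hp
    obtain ⟨hpm1, hind1⟩ := (Finset.mem_filter.mp hp.1).2
    obtain ⟨hpm2, hind2⟩ := (Finset.mem_filter.mp hp.2).2
    obtain ⟨hdm, hpmU⟩ := G.glue hdisj2 hpm1 hpm2
    rw [hUnion] at hpmU
    refine Finset.mem_filter.mpr ⟨Finset.mem_filter.mpr
      ⟨Finset.mem_univ _, hpmU, ?_⟩, ?_⟩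
    · intro e he
      rcases Finset.mem_union.mp he with h | h
      · exact hind1 e h
      · exact hind2 e h
    · obtain ⟨e, ⟨heM, hei⟩, -⟩ := hpm1.2 u (Finset.mem_insert_self u A)
      refine ⟨e, Finset.mem_union_left _ heM, hei, ?_⟩
      have hends := hpm1.1 e heM
      rcases hei with h | h
      · refine Or.inr ?_
        rcases Finset.mem_insert.mp hends.2 with h' | h'
        · exact absurd (h.trans h'.symm) (G.noLoop e)
        · exact h'
      · refine Or.inl ?_
        rcases Finset.mem_insert.mp hends.1 with h' | h'
        · exact absurd (h'.trans h.symm) (G.noLoop e)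
        · exact h'
  · intro M hMm
    obtain ⟨hM1, hex⟩ := Finset.mem_filter.mp hMm
    obtain ⟨hpm, hind⟩ := (Finset.mem_filter.mp hM1).2
    obtain ⟨e0, he0, hu0, hA0⟩ := hex
    have hside := G.sides u v huv A B hdisj huA huB hvA hvB hcover hsep hodd
      hpm he0 hu0 hA0
    have hpm' : G.IsPMOn (insert u A ∪ insert v B) M := hUnion ▸ hpm
    obtain ⟨hS, hT, -⟩ := G.splitPM hdisj2 hpm' hside
    rw [Finset.mem_product]
    constructor
    · exact Finset.mem_filter.mpr ⟨Finset.mem_univ _, hS,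
        fun e he => hind e (Finset.mem_filter.mp he).1⟩
    · exact Finset.mem_filter.mpr ⟨Finset.mem_univ _, hT,
        fun e he => hind e (Finset.mem_filter.mp he).1⟩
  · rintro ⟨M1, M2⟩ hp
    rw [Finset.mem_product] at hp
    obtain ⟨hpm1, hind1⟩ := (Finset.mem_filter.mp hp.1).2
    obtain ⟨hpm2, hind2⟩ := (Finset.mem_filter.mp hp.2).2
    have e1 : (M1 ∪ M2).filter (fun e => G.bothIn (insert u A) e) = M1 := by
      ext e
      simp only [Finset.mem_filter, Finset.mem_union]
      constructor
      · rintro ⟨h | h, hb⟩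
        · exact h
        · exact absurd hb.1
            (fun hc => Finset.disjoint_left.mp hdisj2 hc (hpm2.1 e h).1)
      · intro h
        exact ⟨Or.inl h, hpm1.1 e h⟩
    have e2 : (M1 ∪ M2).filter (fun e => G.bothIn (insert v B) e) = M2 := by
      ext e
      simp only [Finset.mem_filter, Finset.mem_union]
      constructor
      · rintro ⟨h | h, hb⟩
        · exact absurd hb.1
            (fun hc => Finset.disjoint_right.mp hdisj2 hc (hpm1.1 e h).1)
        · exact h
      · intro h
        exact ⟨Or.inr h, hpm2.1 e h⟩
    simp only [e1, e2]
  · intro M hMm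
    obtain ⟨hM1, hex⟩ := Finset.mem_filter.mp hMm
    obtain ⟨hpm, hind⟩ := (Finset.mem_filter.mp hM1).2
    obtain ⟨e0, he0, hu0, hA0⟩ := hex
    have hside := G.sides u v huv A B hdisj huA huB hvA hvB hcover hsep hodd
      hpm he0 hu0 hA0
    have hpm' : G.IsPMOn (insert u A ∪ insert v B) M := hUnion ▸ hpm
    obtain ⟨-, -, hsplit⟩ := G.splitPM hdisj2 hpm' hside
    exact hsplit.symm
  · rintro ⟨M1, M2⟩ hp
    rw [Finset.mem_product] at hp
    obtain ⟨hpm1, -⟩ := (Finset.mem_filter.mp hp.1).2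
    obtain ⟨hpm2, -⟩ := (Finset.mem_filter.mp hp.2).2
    exact (Finset.prod_union (G.glue hdisj2 hpm1 hpm2).1).symm

lemma wcol_split (u v : V) (huv : u ≠ v) (A B : Finset V)
    (hdisj : Disjoint A B) (huA : u ∉ A) (huB : u ∉ B) (hvA : v ∉ A) (hvB : v ∉ B)
    (hcover : ∀ x : V, x ∈ A ∨ x ∈ B ∨ x = u ∨ x = v)
    (hsep : ∀ e : G.E, ¬ (G.fst e ∈ A ∧ G.snd e ∈ B) ∧ ¬ (G.fst e ∈ B ∧ G.snd e ∈ A))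
    (hodd : Odd A.card) (vc : V → ℕ) :
    G.wcol vc = G.wcolOn (insert u A) vc * G.wcolOn (insert v B) vc
              + G.wcolOn (insert v A) vc * G.wcolOn (insert u B) vc := by
  classical
  have hcover' : ∀ x : V, x ∈ A ∨ x ∈ B ∨ x = v ∨ x = u := by
    intro x; rcases hcover x with h | h | h | h <;> tauto
  have h0 : G.wcol vc = ∑ M ∈ Finset.univ.filter
      (fun M => G.IsPMOn Finset.univ M ∧ G.Induces M vc), ∏ e ∈ M, G.w e := rfl
  have key := Finset.sum_filter_add_sum_filter_not
    (Finset.univ.filter (fun M => G.IsPMOn Finset.univ M ∧ G.Induces M vc))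
    (fun M => ∃ e ∈ M, G.inc e u ∧ (G.fst e ∈ A ∨ G.snd e ∈ A))
    (fun M => ∏ e ∈ M, G.w e)
  have hfc : (Finset.univ.filter
        (fun M => G.IsPMOn Finset.univ M ∧ G.Induces M vc)).filter
        (fun M => ¬ ∃ e ∈ M, G.inc e u ∧ (G.fst e ∈ A ∨ G.snd e ∈ A))
      = (Finset.univ.filter
        (fun M => G.IsPMOn Finset.univ M ∧ G.Induces M vc)).filter
        (fun M => ∃ e ∈ M, G.inc e v ∧ (G.fst e ∈ A ∨ G.snd e ∈ A)) := by
    apply Finset.filter_congr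
    intro M hMm
    obtain ⟨hor, hnot⟩ := G.crossing_cases u v huv A B hdisj huA huB hvA hvB
      hcover hsep hodd (Finset.mem_filter.mp hMm).2.1
    constructor
    · intro hnP
      rcases hor with h | h
      · exact absurd h hnP
      · exact h
    · intro hQ hP
      exact hnot ⟨hP, hQ⟩
  rw [h0, ← key, hfc,
    G.sum_part u v huv A B hdisj huA huB hvA hvB hcover hsep hodd vc,
    G.sum_part v u huv.symm A B hdisj hvA hvB huA huB hcover' hsep hodd vc]

end EMG

end Helpers

/-- In a GHZ multigraph with a 2-cut `{u,v}` separating `A` (odd) from `B`,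
for any two distinct colours `a` (playing `1`) and `b` (playing `2`) whose
monochromatic colourings have weight `1`,
`w(b_A a_u)·w(b_B a_v)·w(b_A a_v)·w(b_B a_u) = 0`. -/
theorem stmt9 {V : Type} [Fintype V] [DecidableEq V] (G : EMG V)
    (u v : V) (huv : u ≠ v)
    (A B : Finset V)
    (hAne : A.Nonempty) (hBne : B.Nonempty)
    (hdisj : Disjoint A B)
    (huAB : u ∉ A ∧ u ∉ B) (hvAB : v ∉ A ∧ v ∉ B)
    (hcover : ∀ x : V, x ∈ A ∨ x ∈ B ∨ x = u ∨ x = v)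
    (hsep : ∀ e : G.E, ¬ (G.fst e ∈ A ∧ G.snd e ∈ B) ∧ ¬ (G.fst e ∈ B ∧ G.snd e ∈ A))
    (hodd : Odd A.card)
    (hGHZ : G.IsGHZ)
    (a b : ℕ) (hab : a ≠ b)
    (hwa : G.wcol (fun _ => a) = 1) (hwb : G.wcol (fun _ => b) = 1) :
    G.wcolOn (insert u A) (fun x => if x = u then a else b) *
    G.wcolOn (insert v B) (fun x => if x = v then a else b) *
    G.wcolOn (insert v A) (fun x => if x = v then a else b) *
    G.wcolOn (insert u B) (fun x => if x = u then a else b) = 0 := by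
  classical
  obtain ⟨huA, huB⟩ := huAB
  obtain ⟨hvA, hvB⟩ := hvAB
  have hvu : v ≠ u := huv.symm
  obtain ⟨x0, hx0A⟩ := hAne
  have hx0u : x0 ≠ u := fun h => huA (h ▸ hx0A)
  have hx0v : x0 ≠ v := fun h => hvA (h ▸ hx0A)
  have hcover' : ∀ x : V, x ∈ A ∨ x ∈ B ∨ x = v ∨ x = u := by
    intro x; rcases hcover x with h | h | h | h <;> tauto
  -- non-membership facts
  have hne_uA_v : ∀ x ∈ insert u A, x ≠ v := by
    intro x hx
    rcases Finset.mem_insert.mp hx with rfl | h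
    · exact huv
    · exact fun hh => hvA (hh ▸ h)
  have hne_vB_u : ∀ x ∈ insert v B, x ≠ u := by
    intro x hx
    rcases Finset.mem_insert.mp hx with rfl | h
    · exact hvu
    · exact fun hh => huB (hh ▸ h)
  have hne_vA_u : ∀ x ∈ insert v A, x ≠ u := by
    intro x hx
    rcases Finset.mem_insert.mp hx with rfl | h
    · exact hvu
    · exact fun hh => huA (hh ▸ h)
  have hne_uB_v : ∀ x ∈ insert u B, x ≠ v := by
    intro x hx
    rcases Finset.mem_insert.mp hx with rfl | h
    · exact huv
    · exact fun hh => hvB (hh ▸ h)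
  -- colourings
  -- cu := fun x => if x = u then a else b ; cv := fun x => if x = v then a else b
  -- cb := fun _ => b ; cuv := fun x => if x = u ∨ x = v then a else b
  -- congruence facts
  have h1T : G.wcolOn (insert v B) (fun x => if x = u then a else b)
      = G.wcolOn (insert v B) (fun _ => b) :=
    G.wcolOn_congr _ (fun x hx => by
      show (if x = u then a else b) = b
      rw [if_neg (hne_vB_u x hx)])
  have h1Y : G.wcolOn (insert v A) (fun x => if x = u then a else b)
      = G.wcolOn (insert v A) (fun _ => b) :=
    G.wcolOn_congr _ (fun x hx => by
      show (if x = u then a else b) = b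
      rw [if_neg (hne_vA_u x hx)])
  have h2X : G.wcolOn (insert u A) (fun x => if x = v then a else b)
      = G.wcolOn (insert u A) (fun _ => b) :=
    G.wcolOn_congr _ (fun x hx => by
      show (if x = v then a else b) = b
      rw [if_neg (hne_uA_v x hx)])
  have h2Z : G.wcolOn (insert u B) (fun x => if x = v then a else b)
      = G.wcolOn (insert u B) (fun _ => b) :=
    G.wcolOn_congr _ (fun x hx => by
      show (if x = v then a else b) = b
      rw [if_neg (hne_uB_v x hx)])
  have h4a : G.wcolOn (insert u A) (fun x => if x = u ∨ x = v then a else b)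
      = G.wcolOn (insert u A) (fun x => if x = u then a else b) :=
    G.wcolOn_congr _ (fun x hx => by
      show (if x = u ∨ x = v then a else b) = (if x = u then a else b)
      by_cases hxu : x = u <;> simp [hxu, hne_uA_v x hx])
  have h4b : G.wcolOn (insert v B) (fun x => if x = u ∨ x = v then a else b)
      = G.wcolOn (insert v B) (fun x => if x = v then a else b) :=
    G.wcolOn_congr _ (fun x hx => by
      show (if x = u ∨ x = v then a else b) = (if x = v then a else b)
      by_cases hxv : x = v <;> simp [hxv, hne_vB_u x hx])
  have h4c : G.wcolOn (insert v A) (fun x => if x = u ∨ x = v then a else b)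
      = G.wcolOn (insert v A) (fun x => if x = v then a else b) :=
    G.wcolOn_congr _ (fun x hx => by
      show (if x = u ∨ x = v then a else b) = (if x = v then a else b)
      by_cases hxv : x = v <;> simp [hxv, hne_vA_u x hx])
  have h4d : G.wcolOn (insert u B) (fun x => if x = u ∨ x = v then a else b)
      = G.wcolOn (insert u B) (fun x => if x = u then a else b) :=
    G.wcolOn_congr _ (fun x hx => by
      show (if x = u ∨ x = v then a else b) = (if x = u then a else b)
      by_cases hxu : x = u <;> simp [hxu, hne_uB_v x hx])
  -- non-monochromaticity
  have hnm_cu : ¬ ∃ i : ℕ, ∀ x, (fun x => if x = u then a else b) x = i := by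
    rintro ⟨i, hi⟩
    have h1 : a = i := by have := hi u; simpa using this
    have h2 : b = i := by have := hi v; simpa [hvu] using this
    exact hab (h1.trans h2.symm)
  have hnm_cv : ¬ ∃ i : ℕ, ∀ x, (fun x => if x = v then a else b) x = i := by
    rintro ⟨i, hi⟩
    have h1 : a = i := by have := hi v; simpa using this
    have h2 : b = i := by have := hi u; simpa [huv] using this
    exact hab (h1.trans h2.symm)
  have hnm_cuv : ¬ ∃ i : ℕ, ∀ x, (fun x => if x = u ∨ x = v then a else b) x = i := by
    rintro ⟨i, hi⟩
    have h1 : a = i := by have := hi u; simpa using this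
    have h2 : b = i := by have := hi x0; simpa [hx0u, hx0v] using this
    exact hab (h1.trans h2.symm)
  -- the four equations
  have hs1 := G.wcol_split u v huv A B hdisj huA huB hvA hvB hcover hsep hodd
    (fun x => if x = u then a else b)
  rw [hGHZ.2 _ hnm_cu, h1T, h1Y] at hs1
  have hs2 := G.wcol_split u v huv A B hdisj huA huB hvA hvB hcover hsep hodd
    (fun x => if x = v then a else b)
  rw [hGHZ.2 _ hnm_cv, h2X, h2Z] at hs2
  have hs3 := G.wcol_split u v huv A B hdisj huA huB hvA hvB hcover hsep hodd
    (fun _ => b)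
  rw [hwb] at hs3
  have hs4 := G.wcol_split u v huv A B hdisj huA huB hvA hvB hcover hsep hodd
    (fun x => if x = u ∨ x = v then a else b)
  rw [hGHZ.2 _ hnm_cuv, h4a, h4b, h4c, h4d] at hs4
  set al := G.wcolOn (insert u A) (fun x => if x = u then a else b) with hal
  set be := G.wcolOn (insert v B) (fun x => if x = v then a else b) with hbe
  set ga := G.wcolOn (insert v A) (fun x => if x = v then a else b) with hga
  set de := G.wcolOn (insert u B) (fun x => if x = u then a else b) with hde
  set X := G.wcolOn (insert u A) (fun _ => b) with hX
  set Y := G.wcolOn (insert v A) (fun _ => b) with hY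
  set Z := G.wcolOn (insert u B) (fun _ => b) with hZ
  set T := G.wcolOn (insert v B) (fun _ => b) with hT
  -- hs1 : 0 = al * T + Y * de
  -- hs2 : 0 = X * be + ga * Z
  -- hs3 : 1 = X * T + Y * Z
  -- hs4 : 0 = al * be + ga * de
  have key : al * be = 0 := by
    linear_combination (-(X * be)) * hs1 + (Y * de) * hs2 + (al * be) * hs3
      - (Y * Z) * hs4
  linear_combination (ga * de) * key
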